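/- Let f : [0,1]^d → ℝ be a non-negative, continuously differentiable, M₁-Lipschitz, continuous DR-submodular function, and let F(x) = ∫₀¹ (e^{z−1} / ((1−e^{−1}) z)) · (f(1 − e^{−z x}) − f(0)) dz. Then F is differentiable on [0,1]^d and its gradient satisfies ∇F(x) = ∫₀¹ (e^{z−1} / (1−e^{−1})) · (∇f(1 − e^{−z x}) ⊙ e^{−z x}) dz, where ⊙ denotes the coordinate-wise product and e^{−z x} is the coordinate-wise exponential. -/

import Mathlib

open scoped RealInnerProductSpace

noncomputable section

/-- Membership in the unit box `[0,1]^d`. -/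
def inBox {d : ℕ} (x : EuclideanSpace ℝ (Fin d)) : Prop :=
  ∀ i, x i ∈ Set.Icc (0 : ℝ) 1

/-- Continuous DR-submodularity: the gradient is coordinate-wise antitone on `[0,1]^d`. -/
def DRSubmodular {d : ℕ} (f : EuclideanSpace ℝ (Fin d) → ℝ) : Prop :=
  ∀ x y : EuclideanSpace ℝ (Fin d), inBox x → inBox y → (∀ i, x i ≤ y i) →
    ∀ i, gradient f y i ≤ gradient f x i

/-- The exponential reparametrization `h_z(x) = 1 - e^{-z x}` (coordinate-wise). -/
def hmap {d : ℕ} (z : ℝ) (x : EuclideanSpace ℝ (Fin d)) : EuclideanSpace ℝ (Fin d) :=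
  WithLp.toLp 2 (fun i => 1 - Real.exp (-(z * x i)))

/-- Coordinate-wise probabilistic sum `x ⊕ y = 1 - (1-x) ⊙ (1-y)`. -/
def psum {d : ℕ} (x y : EuclideanSpace ℝ (Fin d)) : EuclideanSpace ℝ (Fin d) :=
  WithLp.toLp 2 (fun i => 1 - (1 - x i) * (1 - y i))

/-- Coordinate-wise (Hadamard) product. -/
def had {d : ℕ} (u v : EuclideanSpace ℝ (Fin d)) : EuclideanSpace ℝ (Fin d) :=
  WithLp.toLp 2 (fun i => u i * v i)

/-- Coordinate-wise exponential `e^{-z x}`. -/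
def expv {d : ℕ} (z : ℝ) (x : EuclideanSpace ℝ (Fin d)) : EuclideanSpace ℝ (Fin d) :=
  WithLp.toLp 2 (fun i => Real.exp (-(z * x i)))

/-- The surrogate potential
`F(x) = ∫₀¹ (e^{z-1} / ((1-e⁻¹) z)) (f(1 - e^{-z x}) - f(0)) dz`. -/
def surrogate {d : ℕ} (f : EuclideanSpace ℝ (Fin d) → ℝ)
    (x : EuclideanSpace ℝ (Fin d)) : ℝ :=
  ∫ z in (0:ℝ)..1, (Real.exp (z - 1) / ((1 - Real.exp (-1)) * z)) * (f (hmap z x) - f 0)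

/-- A set `K ⊆ [0,1]^d` is down-closed if `y ∈ K` and `0 ≤ x ≤ y` imply `x ∈ K`. -/
def DownClosed {d : ℕ} (K : Set (EuclideanSpace ℝ (Fin d))) : Prop :=
  ∀ y ∈ K, ∀ x : EuclideanSpace ℝ (Fin d), (∀ i, 0 ≤ x i) → (∀ i, x i ≤ y i) → x ∈ K

section Aux

open MeasureTheory InnerProductSpace

/-- coordinate bounded by norm -/
lemma coord_le_norm {d : ℕ} (y : EuclideanSpace ℝ (Fin d)) (i : Fin d) : |y i| ≤ ‖y‖ := by
  rw [EuclideanSpace.norm_eq]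
  have h1 : |y i| = Real.sqrt (‖y i‖ ^ 2) := by
    rw [Real.sqrt_sq_eq_abs]; simp [Real.norm_eq_abs, abs_abs]
  rw [h1]
  apply Real.sqrt_le_sqrt
  exact Finset.single_le_sum (f := fun j => ‖y j‖ ^ 2) (fun j _ => sq_nonneg _) (Finset.mem_univ i)

/-- norm of Hadamard product -/
lemma had_norm_le {d : ℕ} (g v : EuclideanSpace ℝ (Fin d)) (a : ℝ) (ha : 0 ≤ a)
    (hv : ∀ i, |v i| ≤ a) : ‖had g v‖ ≤ a * ‖g‖ := by
  rw [EuclideanSpace.norm_eq, EuclideanSpace.norm_eq]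
  have h1 : ∑ i, ‖had g v i‖ ^ 2 ≤ a ^ 2 * ∑ i, ‖g i‖ ^ 2 := by
    rw [Finset.mul_sum]
    apply Finset.sum_le_sum
    intro i _
    have : ‖had g v i‖ ^ 2 = (g i) ^ 2 * (v i) ^ 2 := by
      simp [had, Real.norm_eq_abs, mul_pow, sq_abs]
    rw [this]
    have h2 : (v i) ^ 2 ≤ a ^ 2 := by
      rw [← sq_abs]
      exact pow_le_pow_left₀ (abs_nonneg _) (hv i) 2
    have : ‖g i‖ ^ 2 = (g i) ^ 2 := by simp [Real.norm_eq_abs, sq_abs]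
    rw [this]
    nlinarith [sq_nonneg (g i), sq_nonneg (v i)]
  calc Real.sqrt (∑ i, ‖had g v i‖ ^ 2) ≤ Real.sqrt (a ^ 2 * ∑ i, ‖g i‖ ^ 2) :=
        Real.sqrt_le_sqrt h1
    _ = a * Real.sqrt (∑ i, ‖g i‖ ^ 2) := by
        rw [Real.sqrt_mul (sq_nonneg a), Real.sqrt_sq ha]

/-- diagonal continuous linear map -/
def diagCLM {d : ℕ} (c : Fin d → ℝ) : EuclideanSpace ℝ (Fin d) →L[ℝ] EuclideanSpace ℝ (Fin d) :=
  LinearMap.toContinuousLinearMap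
    { toFun := fun u => WithLp.toLp 2 (fun i => c i * u i)
      map_add' := by
        intro u v; ext i
        simp [PiLp.add_apply, mul_add]
      map_smul' := by
        intro a u; ext i
        simp [PiLp.smul_apply, smul_eq_mul]; ring }

@[simp] lemma diagCLM_apply {d : ℕ} (c : Fin d → ℝ) (u : EuclideanSpace ℝ (Fin d)) (i : Fin d) :
    diagCLM c u i = c i * u i := rfl

/-- derivative of the reparametrization map -/
lemma hasFDerivAt_hmap {d : ℕ} (t : ℝ) (x : EuclideanSpace ℝ (Fin d)) :
    HasFDerivAt (fun y => hmap t y)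
      (diagCLM (fun i => t * Real.exp (-(t * x i)))) x := by
  rw [← hasFDerivWithinAt_univ, hasFDerivWithinAt_piLp _]
  intro i
  have ha : HasDerivAt (fun s : ℝ => -(t * s)) (-t) (x i) := by
    simpa using ((hasDerivAt_id (x i)).const_mul (-t))
  have hb : HasDerivAt (fun s : ℝ => Real.exp (-(t * s)))
      (Real.exp (-(t * x i)) * -t) (x i) := by
    simpa [Function.comp_def] using (Real.hasDerivAt_exp (-(t * x i))).comp (x i) ha
  have hc : HasDerivAt (fun s : ℝ => 1 - Real.exp (-(t * s)))
      (t * Real.exp (-(t * x i))) (x i) := by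
    have := (hasDerivAt_const (x i) (1:ℝ)).sub hb
    exact this.congr_deriv (by ring)
  have hp : HasFDerivAt (fun y : EuclideanSpace ℝ (Fin d) => y i)
      (PiLp.proj (𝕜 := ℝ) 2 (fun _ : Fin d => ℝ) i) x := PiLp.hasFDerivAt_apply 2 x i
  have := hc.comp_hasFDerivAt x hp
  apply HasFDerivAt.hasFDerivWithinAt
  exact this.congr_fderiv (ContinuousLinearMap.ext fun u => by simp [diagCLM_apply])

/-- positivity of `1 - e⁻¹` -/
lemma one_sub_exp_neg_one_pos : (0:ℝ) < 1 - Real.exp (-1) := by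
  have : Real.exp (-1) < 1 := Real.exp_lt_one_iff.2 (by norm_num)
  linarith

/-- the key pointwise derivative of the integrand -/
lemma hasFDerivAt_integrand {d : ℕ} (f : EuclideanSpace ℝ (Fin d) → ℝ) (hf : ContDiff ℝ 1 f)
    {t : ℝ} (ht : t ≠ 0) (x : EuclideanSpace ℝ (Fin d)) :
    HasFDerivAt (fun y => (Real.exp (t - 1) / ((1 - Real.exp (-1)) * t)) * (f (hmap t y) - f 0))
      ((InnerProductSpace.toDual ℝ (EuclideanSpace ℝ (Fin d)))
        ((Real.exp (t - 1) / (1 - Real.exp (-1))) • had (gradient f (hmap t x)) (expv t x)))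
      x := by
  have hff : HasFDerivAt f (fderiv ℝ f (hmap t x)) (hmap t x) :=
    (hf.differentiable one_ne_zero (hmap t x)).hasFDerivAt
  have hcomp := hff.comp x (hasFDerivAt_hmap t x)
  have h2 := (hcomp.sub_const (f 0)).const_mul (Real.exp (t - 1) / ((1 - Real.exp (-1)) * t))
  refine h2.congr_fderiv ?_; symm
  apply ContinuousLinearMap.ext
  intro u
  have hgrad : fderiv ℝ f (hmap t x)
      = (InnerProductSpace.toDual ℝ (EuclideanSpace ℝ (Fin d))) (gradient f (hmap t x)) :=
    ((InnerProductSpace.toDual ℝ _).apply_symm_apply _).symm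
  have hone : (1 : ℝ) - Real.exp (-1) ≠ 0 := ne_of_gt one_sub_exp_neg_one_pos
  simp only [ContinuousLinearMap.smul_apply, ContinuousLinearMap.coe_comp',
    Function.comp_apply, hgrad, InnerProductSpace.toDual_apply_apply, smul_eq_mul]
  rw [PiLp.inner_apply, PiLp.inner_apply, Finset.mul_sum]
  apply Finset.sum_congr rfl
  intro i _
  simp only [RCLike.inner_apply, conj_trivial, diagCLM_apply, PiLp.smul_apply, had, expv,
    smul_eq_mul]
  field_simp

end Aux

/-- Gradient of the surrogate potential.
For a non-negative, continuously differentiable, `M₁`-Lipschitz, continuous DR-submodular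
`f`, the surrogate `F` is differentiable on `[0,1]^d` with
`∇F(x) = ∫₀¹ (e^{z-1}/(1-e⁻¹)) (∇f(1 - e^{-z x}) ⊙ e^{-z x}) dz`. -/
theorem stmt2 {d : ℕ} (f : EuclideanSpace ℝ (Fin d) → ℝ) (M₁ : ℝ)
    (hf : ContDiff ℝ 1 f) (hpos : ∀ x, inBox x → 0 ≤ f x)
    (hLip : ∀ x, inBox x → ‖gradient f x‖ ≤ M₁) (hDR : DRSubmodular f) :
    ∀ x : EuclideanSpace ℝ (Fin d), inBox x →
      DifferentiableAt ℝ (surrogate f) x ∧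
      gradient (surrogate f) x =
        ∫ z in (0:ℝ)..1, (Real.exp (z - 1) / (1 - Real.exp (-1))) •
          had (gradient f (hmap z x)) (expv z x) := by
  intro x₀ hx₀
  have hone : (0:ℝ) < 1 - Real.exp (-1) := one_sub_exp_neg_one_pos
  have hM₁ : 0 ≤ M₁ := le_trans (norm_nonneg _) (hLip x₀ hx₀)
  -- continuity facts
  have contgrad : Continuous fun y : EuclideanSpace ℝ (Fin d) => gradient f y := by
    unfold gradient
    exact (InnerProductSpace.toDual ℝ _).symm.continuous.comp (hf.continuous_fderiv one_ne_zero)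
  have conthmap : Continuous fun p : ℝ × (EuclideanSpace ℝ (Fin d)) => hmap p.1 p.2 := by
    have h : Continuous fun p : ℝ × (EuclideanSpace ℝ (Fin d)) =>
        ((fun i => 1 - Real.exp (-(p.1 * p.2 i))) : Fin d → ℝ) := by
      apply continuous_pi; intro i
      have hc2 : Continuous fun p : ℝ × (EuclideanSpace ℝ (Fin d)) => p.2 i :=
        (PiLp.proj (𝕜 := ℝ) 2 (fun _ : Fin d => ℝ) i).continuous.comp continuous_snd
      exact continuous_const.sub (Real.continuous_exp.comp (continuous_fst.mul hc2).neg)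
    exact (PiLp.continuousLinearEquiv 2 ℝ (fun _ : Fin d => ℝ)).symm.continuous.comp h
  have conthm1 : ∀ x : EuclideanSpace ℝ (Fin d), Continuous fun t : ℝ => hmap t x := by
    intro x
    have h2 : Continuous fun t : ℝ => ((t, x) : ℝ × EuclideanSpace ℝ (Fin d)) :=
      continuous_id.prodMk continuous_const
    exact conthmap.comp h2
  have contwx : Continuous fun t : ℝ =>
      (Real.exp (t - 1) / (1 - Real.exp (-1))) • had (gradient f (hmap t x₀)) (expv t x₀) := by
    apply Continuous.fun_smul
    · exact (Real.continuous_exp.comp (continuous_id.sub continuous_const)).div_const _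
    · have hgc : Continuous fun t : ℝ => gradient f (hmap t x₀) := by
        exact contgrad.comp (conthm1 x₀)
      have h : Continuous fun t : ℝ =>
          ((fun i => gradient f (hmap t x₀) i * Real.exp (-(t * x₀ i))) : Fin d → ℝ) := by
        apply continuous_pi; intro i
        have h1 : Continuous fun t : ℝ => gradient f (hmap t x₀) i := by
          exact (PiLp.proj (𝕜 := ℝ) 2 (fun _ : Fin d => ℝ) i).continuous.comp hgc
        have h2 : Continuous fun t : ℝ => Real.exp (-(t * x₀ i)) := by
          exact Real.continuous_exp.comp (continuous_id.mul continuous_const).neg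
        exact h1.mul h2
      exact (PiLp.continuousLinearEquiv 2 ℝ (fun _ : Fin d => ℝ)).symm.continuous.comp h
  -- compact image and gradient bound
  set K : Set (EuclideanSpace ℝ (Fin d)) :=
    (fun p : ℝ × (EuclideanSpace ℝ (Fin d)) => hmap p.1 p.2) ''
      (Set.Icc (0:ℝ) 1 ×ˢ Metric.closedBall x₀ 1) with hKdef
  have hKcomp : IsCompact K :=
    ((isCompact_Icc).prod (isCompact_closedBall x₀ 1)).image conthmap
  obtain ⟨C, hC⟩ := hKcomp.exists_bound_of_continuousOn contgrad.continuousOn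
  -- measurability of the integrand, for every parameter x
  have hmeas : ∀ x : EuclideanSpace ℝ (Fin d),
      MeasureTheory.AEStronglyMeasurable
        (fun t => (Real.exp (t - 1) / ((1 - Real.exp (-1)) * t)) * (f (hmap t x) - f 0))
        (MeasureTheory.volume.restrict (Set.Ioc (0:ℝ) 1)) := by
    intro x
    apply ContinuousOn.aestronglyMeasurable _ measurableSet_Ioc
    apply ContinuousOn.mul
    · apply ContinuousOn.div
      · exact (Real.continuous_exp.comp (continuous_id.sub continuous_const)).continuousOn
      · exact (continuous_const.mul continuous_id).continuousOn
      · intro t ht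
        exact mul_ne_zero (ne_of_gt hone) (ne_of_gt ht.1)
    · have h1 : Continuous fun t : ℝ => f (hmap t x) := by
        exact hf.continuous.comp (conthm1 x)
      exact (h1.sub continuous_const).continuousOn
  -- the box is convex
  have hSconv : Convex ℝ {y : EuclideanSpace ℝ (Fin d) | inBox y} := by
    intro y hy z hz a b ha hb hab
    intro i
    have h1 : (a • y + b • z) i = a * y i + b * z i := by
      simp [PiLp.add_apply, PiLp.smul_apply, smul_eq_mul]
    rw [h1]
    have := (convex_Icc (0:ℝ) 1) (hy i) (hz i) ha hb hab
    simpa [smul_eq_mul] using this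
  have hfdnorm : ∀ y : EuclideanSpace ℝ (Fin d), ‖fderiv ℝ f y‖ = ‖gradient f y‖ := by
    intro y
    unfold gradient
    exact ((InnerProductSpace.toDual ℝ (EuclideanSpace ℝ (Fin d))).symm.norm_map
      (fderiv ℝ f y)).symm
  -- pointwise bound for integrability at x₀
  have hptbd : ∀ t ∈ Set.Ioc (0:ℝ) 1,
      |(Real.exp (t - 1) / ((1 - Real.exp (-1)) * t)) * (f (hmap t x₀) - f 0)|
        ≤ M₁ * Real.sqrt d / (1 - Real.exp (-1)) := by
    intro t ht
    have htpos : 0 < t := ht.1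
    have hmem : hmap t x₀ ∈ {y : EuclideanSpace ℝ (Fin d) | inBox y} := by
      intro i
      have hx : x₀ i ∈ Set.Icc (0:ℝ) 1 := hx₀ i
      have ha1 : 0 ≤ t * x₀ i := mul_nonneg htpos.le hx.1
      constructor
      · have : Real.exp (-(t * x₀ i)) ≤ 1 := Real.exp_le_one_iff.2 (by linarith)
        simp only [hmap, WithLp.ofLp_toLp]; linarith
      · have : 0 < Real.exp (-(t * x₀ i)) := Real.exp_pos _
        simp only [hmap, WithLp.ofLp_toLp]; linarith
    have h0mem : (0 : EuclideanSpace ℝ (Fin d)) ∈ {y : EuclideanSpace ℝ (Fin d) | inBox y} := by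
      intro i
      simp [Set.mem_Icc]
    have hmvt : ‖f (hmap t x₀) - f 0‖ ≤ M₁ * ‖hmap t x₀ - 0‖ := by
      apply Convex.norm_image_sub_le_of_norm_hasFDerivWithin_le
        (f' := fun y => fderiv ℝ f y)
        (fun y _ => ((hf.differentiable one_ne_zero) y).hasFDerivAt.hasFDerivWithinAt)
        (fun y hy => by rw [hfdnorm y]; exact hLip y hy) hSconv h0mem hmem
    have hnorm : ‖hmap t x₀‖ ≤ Real.sqrt d * t := by
      rw [EuclideanSpace.norm_eq]
      have hsum : ∑ i, ‖hmap t x₀ i‖ ^ 2 ≤ ∑ _i : Fin d, t ^ 2 := by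
        apply Finset.sum_le_sum
        intro i _
        have hx : x₀ i ∈ Set.Icc (0:ℝ) 1 := hx₀ i
        have ha1 : 0 ≤ t * x₀ i := mul_nonneg htpos.le hx.1
        have ha2 : t * x₀ i ≤ t := by nlinarith [hx.2]
        have hup : 1 - Real.exp (-(t * x₀ i)) ≤ t := by
          have := Real.add_one_le_exp (-(t * x₀ i))
          linarith
        have hlo : 0 ≤ 1 - Real.exp (-(t * x₀ i)) := by
          have : Real.exp (-(t * x₀ i)) ≤ 1 := Real.exp_le_one_iff.2 (by linarith)
          linarith
        have habs : ‖hmap t x₀ i‖ ≤ t := by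
          rw [Real.norm_eq_abs]
          rw [abs_of_nonneg (by simpa [hmap] using hlo)]
          simpa [hmap] using hup
        calc ‖hmap t x₀ i‖ ^ 2 ≤ t ^ 2 := by
              nlinarith [norm_nonneg (hmap t x₀ i)]
          _ = t ^ 2 := rfl
      calc Real.sqrt (∑ i, ‖hmap t x₀ i‖ ^ 2) ≤ Real.sqrt (∑ _i : Fin d, t ^ 2) :=
            Real.sqrt_le_sqrt hsum
        _ = Real.sqrt ((d : ℝ) * t ^ 2) := by
            rw [Finset.sum_const, Finset.card_univ, Fintype.card_fin, nsmul_eq_mul]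
        _ = Real.sqrt d * t := by
            rw [Real.sqrt_mul (Nat.cast_nonneg d), Real.sqrt_sq htpos.le]
    have hdiff : |f (hmap t x₀) - f 0| ≤ M₁ * (Real.sqrt d * t) := by
      have := hmvt
      rw [sub_zero] at this
      calc |f (hmap t x₀) - f 0| = ‖f (hmap t x₀) - f 0‖ := (Real.norm_eq_abs _).symm
        _ ≤ M₁ * ‖hmap t x₀‖ := this
        _ ≤ M₁ * (Real.sqrt d * t) := mul_le_mul_of_nonneg_left hnorm hM₁
    have hgpos : 0 < Real.exp (t - 1) / ((1 - Real.exp (-1)) * t) :=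
      div_pos (Real.exp_pos _) (mul_pos hone htpos)
    rw [abs_mul, abs_of_pos hgpos]
    have hstep : Real.exp (t - 1) / ((1 - Real.exp (-1)) * t) * |f (hmap t x₀) - f 0|
        ≤ Real.exp (t - 1) / ((1 - Real.exp (-1)) * t) * (M₁ * (Real.sqrt d * t)) :=
      mul_le_mul_of_nonneg_left hdiff hgpos.le
    have hcalc : Real.exp (t - 1) / ((1 - Real.exp (-1)) * t) * (M₁ * (Real.sqrt d * t))
        = Real.exp (t - 1) * (M₁ * Real.sqrt d) / (1 - Real.exp (-1)) := by
      field_simp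
    have hexple : Real.exp (t - 1) ≤ 1 := Real.exp_le_one_iff.2 (by linarith [ht.2])
    have hlast : Real.exp (t - 1) * (M₁ * Real.sqrt d) / (1 - Real.exp (-1))
        ≤ M₁ * Real.sqrt d / (1 - Real.exp (-1)) := by
      have hnum : Real.exp (t - 1) * (M₁ * Real.sqrt d) ≤ M₁ * Real.sqrt d :=
        mul_le_of_le_one_left (mul_nonneg hM₁ (Real.sqrt_nonneg _)) hexple
      gcongr
    exact le_trans hstep (by rw [hcalc]; exact hlast)
  -- integrability of the integrand at x₀
  have hFint : IntervalIntegrable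
      (fun t => (Real.exp (t - 1) / ((1 - Real.exp (-1)) * t)) * (f (hmap t x₀) - f 0))
      MeasureTheory.volume 0 1 := by
    rw [intervalIntegrable_iff_integrableOn_Ioc_of_le zero_le_one]
    apply MeasureTheory.Integrable.mono'
      (MeasureTheory.integrable_const (M₁ * Real.sqrt d / (1 - Real.exp (-1)))) (hmeas x₀)
    rw [MeasureTheory.ae_restrict_iff' measurableSet_Ioc]
    exact MeasureTheory.ae_of_all _ fun t ht => by
      rw [Real.norm_eq_abs]; exact hptbd t ht
  -- the dominated-derivative theorem
  have key : HasFDerivAt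
      (fun x : EuclideanSpace ℝ (Fin d) =>
        ∫ t in (0:ℝ)..1, (Real.exp (t - 1) / ((1 - Real.exp (-1)) * t)) * (f (hmap t x) - f 0))
      (∫ t in (0:ℝ)..1, (InnerProductSpace.toDual ℝ (EuclideanSpace ℝ (Fin d)))
        ((Real.exp (t - 1) / (1 - Real.exp (-1))) • had (gradient f (hmap t x₀)) (expv t x₀)))
      x₀ := by
    apply intervalIntegral.hasFDerivAt_integral_of_dominated_of_fderiv_le
      (F' := fun x t => (InnerProductSpace.toDual ℝ (EuclideanSpace ℝ (Fin d)))
        ((Real.exp (t - 1) / (1 - Real.exp (-1))) • had (gradient f (hmap t x)) (expv t x)))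
      (bound := fun _ => (1 / (1 - Real.exp (-1))) * (Real.exp 1 * C)) (s := Metric.ball x₀ 1)
        (Metric.ball_mem_nhds x₀ one_pos)
    · exact Filter.Eventually.of_forall fun x => by
        rw [Set.uIoc_of_le zero_le_one]; exact hmeas x
    · exact hFint
    · rw [Set.uIoc_of_le zero_le_one]
      have hcont : Continuous fun t : ℝ =>
          (InnerProductSpace.toDual ℝ (EuclideanSpace ℝ (Fin d)))
            ((Real.exp (t - 1) / (1 - Real.exp (-1))) •
              had (gradient f (hmap t x₀)) (expv t x₀)) := by
        exact (InnerProductSpace.toDual ℝ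
          (EuclideanSpace ℝ (Fin d))).continuous.comp contwx
      exact hcont.aestronglyMeasurable
    · apply MeasureTheory.ae_of_all
      intro t ht x hx
      rw [Set.uIoc_of_le zero_le_one] at ht
      rw [LinearIsometryEquiv.norm_map, norm_smul, Real.norm_eq_abs]
      have hmemK : hmap t x ∈ K := by
        refine ⟨(t, x), ⟨⟨ht.1.le, ht.2⟩, Metric.ball_subset_closedBall hx⟩, rfl⟩
      have hg : ‖gradient f (hmap t x)‖ ≤ C := hC _ hmemK
      have hvb : ∀ i, |expv t x i| ≤ Real.exp 1 := by
        intro i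
        have hxi : -1 ≤ x i := by
          have h1 : |x i - x₀ i| ≤ ‖x - x₀‖ := by
            have := coord_le_norm (x - x₀) i
            simpa [PiLp.sub_apply] using this
          have h2 : ‖x - x₀‖ < 1 := by
            rw [← dist_eq_norm]; exact Metric.mem_ball.1 hx
          have h3 : 0 ≤ x₀ i := (hx₀ i).1
          have := abs_le.1 (le_of_lt (lt_of_le_of_lt h1 h2))
          linarith [this.1]
        have harg : -(t * x i) ≤ 1 := by
          nlinarith [mul_nonneg ht.1.le (by linarith : (0:ℝ) ≤ x i + 1), ht.1, ht.2]
        rw [show expv t x i = Real.exp (-(t * x i)) from rfl,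
          abs_of_pos (Real.exp_pos _)]
        exact Real.exp_le_exp.2 harg
      have hhad : ‖had (gradient f (hmap t x)) (expv t x)‖ ≤ Real.exp 1 * C := by
        refine le_trans (had_norm_le _ _ _ (Real.exp_pos 1).le hvb) ?_
        exact mul_le_mul_of_nonneg_left hg (Real.exp_pos 1).le
      have hsc : |Real.exp (t - 1) / (1 - Real.exp (-1))| ≤ 1 / (1 - Real.exp (-1)) := by
        rw [abs_of_pos (div_pos (Real.exp_pos _) hone)]
        have h1 : Real.exp (t - 1) ≤ 1 := Real.exp_le_one_iff.2 (by linarith [ht.2])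
        gcongr
      exact mul_le_mul hsc hhad (norm_nonneg _) (by positivity)
    · exact intervalIntegrable_const
    · apply MeasureTheory.ae_of_all
      intro t ht x hx
      rw [Set.uIoc_of_le zero_le_one] at ht
      exact hasFDerivAt_integrand f hf (ne_of_gt ht.1) x
  -- commuting `toDual` with the integral
  have contw' : Continuous fun t : ℝ =>
      (InnerProductSpace.toDual ℝ (EuclideanSpace ℝ (Fin d)))
        ((Real.exp (t - 1) / (1 - Real.exp (-1))) •
          had (gradient f (hmap t x₀)) (expv t x₀)) := by
    exact (InnerProductSpace.toDual ℝ (EuclideanSpace ℝ (Fin d))).continuous.comp contwx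
  have hI'int : IntervalIntegrable
      (fun t => (InnerProductSpace.toDual ℝ (EuclideanSpace ℝ (Fin d)))
        ((Real.exp (t - 1) / (1 - Real.exp (-1))) •
          had (gradient f (hmap t x₀)) (expv t x₀))) MeasureTheory.volume 0 1 :=
    contw'.intervalIntegrable 0 1
  have hIint : MeasureTheory.Integrable
      (fun t => (Real.exp (t - 1) / (1 - Real.exp (-1))) •
        had (gradient f (hmap t x₀)) (expv t x₀))
      (MeasureTheory.volume.restrict (Set.Ioc (0:ℝ) 1)) := by
    rw [← MeasureTheory.IntegrableOn,
      ← intervalIntegrable_iff_integrableOn_Ioc_of_le zero_le_one]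
    exact contwx.intervalIntegrable 0 1
  have heq : (∫ t in (0:ℝ)..1, (InnerProductSpace.toDual ℝ (EuclideanSpace ℝ (Fin d)))
        ((Real.exp (t - 1) / (1 - Real.exp (-1))) •
          had (gradient f (hmap t x₀)) (expv t x₀)))
      = (InnerProductSpace.toDual ℝ (EuclideanSpace ℝ (Fin d)))
        (∫ t in (0:ℝ)..1, (Real.exp (t - 1) / (1 - Real.exp (-1))) •
          had (gradient f (hmap t x₀)) (expv t x₀)) := by
    apply ContinuousLinearMap.ext
    intro u
    rw [ContinuousLinearMap.intervalIntegral_apply hI'int u, InnerProductSpace.toDual_apply_apply,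
      intervalIntegral.integral_of_le zero_le_one, intervalIntegral.integral_of_le zero_le_one,
      real_inner_comm, ← integral_inner hIint u]
    simp only [InnerProductSpace.toDual_apply_apply]
    exact MeasureTheory.integral_congr_ae
      (Filter.Eventually.of_forall fun t => real_inner_comm _ _)
  have hGrad : HasGradientAt (surrogate f)
      (∫ t in (0:ℝ)..1, (Real.exp (t - 1) / (1 - Real.exp (-1))) •
        had (gradient f (hmap t x₀)) (expv t x₀)) x₀ := by
    rw [hasGradientAt_iff_hasFDerivAt, ← heq]
    exact key
  exact ⟨hGrad.differentiableAt, hGrad.gradient⟩
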